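/- Let (X,d) be a complete metric space and T : X → X be a Meir-Keeler contraction. Then T is a Picard operator. -/

import Mathlib

open Filter Topology

/-- `T` is a Picard operator: it has a unique fixed point `u` and every
sequence of iterates converges to `u`. -/
def IsPicardOperator {X : Type*} [MetricSpace X] (T : X → X) : Prop :=
  ∃ u : X, T u = u ∧ (∀ v : X, T v = v → v = u) ∧
    ∀ x : X, Tendsto (fun n => T^[n] x) atTop (𝓝 u)

/-- `T` is contractive: `d(Tx,Ty) < d(x,y)` whenever `x ≠ y`. -/
def Contractive {X : Type*} [MetricSpace X] (T : X → X) : Prop :=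
  ∀ x y : X, x ≠ y → dist (T x) (T y) < dist x y

/-- The Matkowski–Węgrzyk condition. -/
def MWCondition {X : Type*} [MetricSpace X] (T : X → X) : Prop :=
  ∀ ε > (0 : ℝ), ∃ δ > (0 : ℝ), ∀ x y : X,
    ε < dist x y → dist x y < ε + δ → dist (T x) (T y) ≤ ε

/-- `T` is a CJMP-contraction. -/
def IsCJMP {X : Type*} [MetricSpace X] (T : X → X) : Prop :=
  Contractive T ∧ MWCondition T

theorem stmt_1 {X : Type*} [MetricSpace X] [CompleteSpace X] [Nonempty X] (T : X → X)
    (hMK : ∀ ε > (0 : ℝ), ∃ δ > (0 : ℝ), ∀ x y : X,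
      ε ≤ dist x y → dist x y < ε + δ → dist (T x) (T y) < ε) :
    IsPicardOperator T := by
  -- T is contractive
  have hcon : ∀ x y : X, x ≠ y → dist (T x) (T y) < dist x y := by
    intro x y hxy
    have hpos : (0:ℝ) < dist x y := dist_pos.mpr hxy
    obtain ⟨δ, hδ, h⟩ := hMK (dist x y) hpos
    exact h x y le_rfl (lt_add_of_pos_right _ hδ)
  -- T is nonexpansive
  have hne : ∀ x y : X, dist (T x) (T y) ≤ dist x y := by
    intro x y
    rcases eq_or_ne x y with rfl | h
    · simp
    · exact (hcon x y h).le
  -- distances of iterates tend to zero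
  have hdist0 : ∀ x y : X,
      Tendsto (fun n => dist (T^[n] x) (T^[n] y)) atTop (𝓝 0) := by
    intro x y
    set a : ℕ → ℝ := fun n => dist (T^[n] x) (T^[n] y) with ha
    have hanti : Antitone a := by
      refine antitone_nat_of_succ_le fun n => ?_
      simp only [ha, Function.iterate_succ_apply']
      exact hne _ _
    have hbdd : BddBelow (Set.range a) := ⟨0, by rintro _ ⟨n, rfl⟩; exact dist_nonneg⟩
    have htend : Tendsto a atTop (𝓝 (⨅ n, a n)) :=
      tendsto_atTop_ciInf hanti hbdd
    have hr0 : (⨅ n, a n) = 0 := by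
      set r := ⨅ n, a n with hr
      have hrnn : 0 ≤ r := le_ciInf fun n => dist_nonneg
      rcases hrnn.lt_or_eq with hpos | heq
      · exfalso
        obtain ⟨δ, hδ, h⟩ := hMK r hpos
        obtain ⟨n, hn⟩ := exists_lt_of_ciInf_lt (lt_add_of_pos_right r hδ)
        have h1 : r ≤ a n := ciInf_le hbdd n
        have h2 : dist (T (T^[n] x)) (T (T^[n] y)) < r := h _ _ h1 hn
        have h3 : r ≤ a (n+1) := ciInf_le hbdd (n+1)
        rw [ha] at h3
        simp only [Function.iterate_succ_apply'] at h3
        exact absurd h2 (not_lt.mpr h3)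
      · exact heq.symm
    rwa [hr0] at htend
  -- the orbit of any point is Cauchy
  obtain ⟨x0⟩ := ‹Nonempty X›
  have hcauchy : CauchySeq (fun n => T^[n] x0) := by
    rw [Metric.cauchySeq_iff']
    intro ε hε
    have hε2 : (0:ℝ) < ε/2 := by linarith
    obtain ⟨δ, hδ, h⟩ := hMK (ε/2) hε2
    set δ' := min δ (ε/2) with hδ'
    have hδ'pos : 0 < δ' := lt_min hδ hε2
    have hsmall : Tendsto (fun n => dist (T^[n] x0) (T^[n] (T x0))) atTop (𝓝 0) :=
      hdist0 x0 (T x0)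
    obtain ⟨N, hN⟩ := (Metric.tendsto_atTop.mp hsmall δ' hδ'pos)
    have hNstep : ∀ n ≥ N, dist (T^[n] x0) (T^[n+1] x0) < δ' := by
      intro n hn
      have := hN n hn
      rw [Real.dist_eq, sub_zero, abs_of_nonneg dist_nonneg] at this
      simpa [Function.iterate_succ_apply] using this
    refine ⟨N, fun n hn => ?_⟩
    obtain ⟨m, rfl⟩ := Nat.exists_eq_add_of_le hn
    have key : ∀ m : ℕ, dist (T^[N+m] x0) (T^[N] x0) < ε/2 + δ' := by
      intro m
      induction m with
      | zero => simpa using (by linarith : (0:ℝ) < ε/2 + δ')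
      | succ m ih =>
        rcases lt_or_ge (dist (T^[N+m] x0) (T^[N] x0)) (ε/2) with hlt | hge
        · calc dist (T^[N+m+1] x0) (T^[N] x0)
              ≤ dist (T^[N+m+1] x0) (T^[N+m] x0) + dist (T^[N+m] x0) (T^[N] x0) :=
                dist_triangle _ _ _
            _ < δ' + ε/2 := by
                have := hNstep (N+m) (Nat.le_add_right _ _)
                rw [dist_comm] at this
                exact add_lt_add this hlt
            _ = ε/2 + δ' := by ring
        · have hlt2 : dist (T^[N+m] x0) (T^[N] x0) < ε/2 + δ := lt_of_lt_of_le ih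
            (by gcongr; exact min_le_left _ _)
          have h2 : dist (T (T^[N+m] x0)) (T (T^[N] x0)) < ε/2 := h _ _ hge hlt2
          calc dist (T^[N+m+1] x0) (T^[N] x0)
              ≤ dist (T^[N+m+1] x0) (T^[N+1] x0) + dist (T^[N+1] x0) (T^[N] x0) :=
                dist_triangle _ _ _
            _ < ε/2 + δ' := by
                have h3 : dist (T^[N+m+1] x0) (T^[N+1] x0) < ε/2 := by
                  simpa [Function.iterate_succ_apply'] using h2
                have h4 : dist (T^[N+1] x0) (T^[N] x0) < δ' := by
                  rw [dist_comm]; exact hNstep N le_rfl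
                exact add_lt_add h3 h4
    calc dist (T^[N+m] x0) (T^[N] x0) < ε/2 + δ' := key m
      _ ≤ ε/2 + ε/2 := by gcongr; exact min_le_right _ _
      _ = ε := by ring
  obtain ⟨u, hu⟩ := cauchySeq_tendsto_of_complete hcauchy
  -- u is a fixed point
  have hTcont : Continuous T := (LipschitzWith.of_dist_le_mul (by
    intro x y; rw [NNReal.coe_one, one_mul]; exact hne x y)).continuous
  have hfix : T u = u := by
    have h1 : Tendsto (fun n => T^[n+1] x0) atTop (𝓝 (T u)) := by
      simpa [Function.iterate_succ_apply', Function.comp_def] using (hTcont.continuousAt.tendsto.comp hu)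
    have h2 : Tendsto (fun n => T^[n+1] x0) atTop (𝓝 u) :=
      hu.comp (tendsto_add_atTop_nat 1)
    exact tendsto_nhds_unique h1 h2
  refine ⟨u, hfix, fun v hv => ?_, fun x => ?_⟩
  · by_contra hne'
    have := hcon v u hne'
    rw [hv, hfix] at this
    exact lt_irrefl _ this
  · have h0 : Tendsto (fun n => dist (T^[n] x) (T^[n] u)) atTop (𝓝 0) := hdist0 x u
    have heq : ∀ n, T^[n] u = u := fun n => Function.iterate_fixed hfix n
    simp only [heq] at h0
    exact tendsto_iff_dist_tendsto_zero.mpr h0
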